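/- arXiv:1409.0971 — 4 statements merged into one kernel-verified Lean document; each statement's English description precedes it below -/
import Mathlib

section
/- Let k_1 ≥ 4 be an even integer and g an integer. Then (g, 2k_1+1) ∈ S2 if and only if (g + 3k_1 + 3, 2k_1 + 4) ∈ T1 and L(g + 3k_1 + 3, 2k_1 + 4) < 0. (This is the precise form of the correspondence in Corollary 'final2' between S2 and T1 under the shift (g,k) ↦ (g + 3(k+1)/2, k+3) of construction 3.) -/
/-- `L(g,k)` for even `k = 2k₁`: `L = 2g − 2k₁²`. -/
def Leven (g k1 : ℤ) : ℤ := 2 * g - 2 * k1 ^ 2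

/-- `S2 = {(g,k) : k = 2k₁+1 ≥ 9, k ≡ 1 (mod 4), k₁²+k₁−1−⌊(k₁−2)²/12⌋ ≤ g ≤ k₁²+k₁}`. -/
def S2 : Set (ℤ × ℤ) :=
  {p | ∃ g k1 : ℤ, p = (g, 2 * k1 + 1) ∧ 9 ≤ 2 * k1 + 1 ∧ (2 * k1 + 1) % 4 = 1 ∧
    k1 ^ 2 + k1 - 1 - (k1 - 2) ^ 2 / 12 ≤ g ∧ g ≤ k1 ^ 2 + k1}

/-- `T1 = {(g,k) : k = 2k₁ ≥ 8, k ≡ 0 (mod 4), k₁²−2−⌊(k₁−4)²/12⌋ ≤ g ≤ k₁²+k₁}`. -/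
def T1 : Set (ℤ × ℤ) :=
  {p | ∃ g k1 : ℤ, p = (g, 2 * k1) ∧ 8 ≤ 2 * k1 ∧ (2 * k1) % 4 = 0 ∧
    k1 ^ 2 - 2 - (k1 - 4) ^ 2 / 12 ≤ g ∧ g ≤ k1 ^ 2 + k1}

/-- Let `k₁ ≥ 4` be an even integer and `g` an integer.  Then `(g, 2k₁+1) ∈ S2` if and only
if `(g + 3k₁ + 3, 2k₁ + 4) ∈ T1` and `L(g + 3k₁ + 3, 2k₁ + 4) < 0` (where
`2k₁ + 4 = 2(k₁+2)` is even, so `L` is computed with the even-parity convention). -/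
theorem mem_S2_iff_shift_mem_T1 (k1 g : ℤ) (hk1 : 4 ≤ k1) (hev : Even k1) :
    (g, 2 * k1 + 1) ∈ S2 ↔
      ((g + 3 * k1 + 3, 2 * k1 + 4) ∈ T1 ∧ Leven (g + 3 * k1 + 3) (k1 + 2) < 0) := by
  obtain ⟨m, hm⟩ := hev
  constructor
  · rintro ⟨g', k', hp, h9, hmod, hlo, hhi⟩
    rw [Prod.ext_iff] at hp
    have hg : g' = g := by omega
    have hk : k' = k1 := by omega
    rw [hg, hk] at hlo hhi
    refine ⟨⟨g + 3 * k1 + 3, k1 + 2, by rw [Prod.ext_iff]; constructor <;> [rfl; (simp; ring)],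
      by omega, by omega, ?_, ?_⟩, ?_⟩
    · have h : (k1 + 2 - 4) ^ 2 = (k1 - 2) ^ 2 := by ring
      rw [h]
      nlinarith [hlo]
    · nlinarith
    · unfold Leven
      nlinarith
  · rintro ⟨⟨g', k', hp, h8, hmod, hlo, hhi⟩, hL⟩
    rw [Prod.ext_iff] at hp
    have hg : g' = g + 3 * k1 + 3 := by omega
    have hk : k' = k1 + 2 := by omega
    rw [hg, hk] at hlo hhi
    refine ⟨g, k1, rfl, by omega, by omega, ?_, ?_⟩
    · have h : (k1 + 2 - 4) ^ 2 = (k1 - 2) ^ 2 := by ring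
      rw [h] at hlo
      nlinarith
    · unfold Leven at hL
      have : g < k1 ^ 2 + k1 + 1 := by nlinarith
      linarith [Int.lt_iff_add_one_le.mp this]
end

section
/- Let k_1 ≥ 3 be an odd integer and g an integer. If (g + 3k_1 + 3, 2k_1 + 4) ∈ T2 and L(g + 3k_1 + 3, 2k_1 + 4) < 0, then (g, 2k_1+1) ∈ S3. (This is the precise form of the correspondence in Corollary 'final2' between S3 and T2 under the shift (g,k) ↦ (g + 3(k+1)/2, k+3) of construction 3: every pair of T2 with L < 0 arises from a pair of S3.) -/
/-- `S3 = {(g,k) : k = 2k₁+1 ≥ 7, k ≡ 3 (mod 4), k₁²+k₁−⌊((k₁−2)²+3)/12⌋ ≤ g ≤ k₁²+k₁}`. -/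
def S3 : Set (ℤ × ℤ) :=
  {p | ∃ g k1 : ℤ, p = (g, 2 * k1 + 1) ∧ 7 ≤ 2 * k1 + 1 ∧ (2 * k1 + 1) % 4 = 3 ∧
    k1 ^ 2 + k1 - ((k1 - 2) ^ 2 + 3) / 12 ≤ g ∧ g ≤ k1 ^ 2 + k1}

/-- `T2 = {(g,k) : k = 2k₁ ≥ 10, k ≡ 2 (mod 4), k₁²−1−⌊(k₁−4)²/12⌋ ≤ g ≤ k₁²+k₁}`. -/
def T2 : Set (ℤ × ℤ) :=
  {p | ∃ g k1 : ℤ, p = (g, 2 * k1) ∧ 10 ≤ 2 * k1 ∧ (2 * k1) % 4 = 2 ∧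
    k1 ^ 2 - 1 - (k1 - 4) ^ 2 / 12 ≤ g ∧ g ≤ k1 ^ 2 + k1}

/-- Let `k₁ ≥ 3` be an odd integer and `g` an integer.  If `(g + 3k₁ + 3, 2k₁ + 4) ∈ T2`
and `L(g + 3k₁ + 3, 2k₁ + 4) < 0` (where `2k₁ + 4 = 2(k₁+2)` is even, so `L` is computed
with the even-parity convention), then `(g, 2k₁+1) ∈ S3`. -/
theorem mem_S3_of_shift_mem_T2 (k1 g : ℤ) (hk1 : 3 ≤ k1) (hodd : Odd k1)
    (hT2 : (g + 3 * k1 + 3, 2 * k1 + 4) ∈ T2)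
    (hL : Leven (g + 3 * k1 + 3) (k1 + 2) < 0) :
    (g, 2 * k1 + 1) ∈ S3 := by
  obtain ⟨g', k1', heq, h10, hmod, hlo, hhi⟩ := hT2
  rw [Prod.ext_iff] at heq
  obtain ⟨hg', hk'⟩ := heq
  have hk1' : k1' = k1 + 2 := by omega
  have hg'' : g' = g + 3 * k1 + 3 := by omega
  subst hk1' hg''
  obtain ⟨m, hm⟩ := hodd
  refine ⟨g, k1, rfl, by omega, by omega, ?_, ?_⟩
  · have hmono : (k1 - 2) ^ 2 / 12 ≤ ((k1 - 2) ^ 2 + 3) / 12 :=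
      Int.ediv_le_ediv (by norm_num) (by linarith)
    have : (k1 + 2 - 4) ^ 2 = (k1 - 2) ^ 2 := by ring
    rw [this] at hlo
    nlinarith [hlo, hmono]
  · simp only [Leven] at hL
    nlinarith [hL]
end

section
/- Every (k+n)×(2g-2) integer matrix c satisfying conditions (C1)-(C6) has all entries nonnegative. (This is Lemma A.4: the entries of the uniquely determined matrix c^Γ are all nonnegative.) -/
namespace BFM

/-- The sequence `a(k) = (0,0,1,1,…,k₁−1,k₁−1,k₁)`, indexed from `1`:
its `i`-th entry is `⌊(i−1)/2⌋`. -/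
def seqA (i : ℤ) : ℤ := (i - 1) / 2

/-- The number of indices `i ∈ {1,…,K}` with `a i = x` (the multiplicity of `x` in the
sequence `a` of length `K`). -/
noncomputable def multCount (K : ℤ) (a : ℤ → ℤ) (x : ℤ) : ℕ :=
  ((Finset.Icc (1 : ℤ) K).filter fun i => a i = x).card

/-- `(i₁, i₂)` is a pair of special indices for the pair of sequences `(a, b)` of length
`K` with respect to `d`: `i₁ < i₂` and both row sums equal `d`. -/
def IsSpecialPair (K d : ℤ) (a b : ℤ → ℤ) (i1 i2 : ℤ) : Prop :=
  1 ≤ i1 ∧ i1 < i2 ∧ i2 ≤ K ∧ a i1 + b i1 = d ∧ a i2 + b i2 = d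

/-- Condition (I) for a nondecreasing sequence `a` and a nonincreasing sequence `b`, both
of length `K` (indices `1,…,K`), with respect to `d`. -/
structure CondI (K d : ℤ) (a b : ℤ → ℤ) : Prop where
  mono : ∀ i i', 1 ≤ i → i ≤ i' → i' ≤ K → a i ≤ a i'
  anti : ∀ i i', 1 ≤ i → i ≤ i' → i' ≤ K → b i' ≤ b i
  sum_le : ∀ i, 1 ≤ i → i ≤ K → a i + b i ≤ d
  le_sum : ∀ i, 1 ≤ i → i ≤ K → d - 1 ≤ a i + b i
  special : ∃! p : ℤ × ℤ, IsSpecialPair K d a b p.1 p.2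
  a_mult : ∀ x : ℤ, multCount K a x ≤ 2
  b_mult : ∀ x : ℤ, multCount K b x ≤ 2
  no_extra : ∀ i1 i2, IsSpecialPair K d a b i1 i2 →
    ∀ i, 1 ≤ i → i ≤ K → i ≠ i1 → i ≠ i2 → ¬(a i = a i1 ∧ b i = b i2)

/-- Condition (II) for a nondecreasing sequence `a` and a nonincreasing sequence `b`, both
of length `K` (indices `1,…,K`), with respect to `d`. -/
structure CondII (K d : ℤ) (a b : ℤ → ℤ) : Prop where
  mono : ∀ i i', 1 ≤ i → i ≤ i' → i' ≤ K → a i ≤ a i'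
  anti : ∀ i i', 1 ≤ i → i ≤ i' → i' ≤ K → b i' ≤ b i
  sum_le : ∀ i, 1 ≤ i → i ≤ K → a i + b i ≤ d + 1
  le_sum : ∀ i, 1 ≤ i → i ≤ K → d - 1 ≤ a i + b i
  exists_ell : ∃ l, 1 ≤ l ∧ l ≤ K ∧ a l + b l = d + 1
  a_mult : ∀ x : ℤ, multCount K a x ≤ 2
  b_mult : ∀ x : ℤ, multCount K b x ≤ 2
  exists_istar : ∃ istar, 1 ≤ istar ∧ istar < K ∧ a istar = a (istar + 1) ∧
    a istar + b istar = d ∧ a (istar + 1) + b (istar + 1) = d ∧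
    (∀ x y : ℤ, (x, y) ≠ (a istar, b istar) →
      ((Finset.Icc (1 : ℤ) K).filter fun i => a i = x ∧ b i = y).card ≤ 1) ∧
    (∀ x : ℤ, (x, d - x) ≠ (a istar, b istar) →
      ((Finset.Icc (1 : ℤ) K).filter fun i => x ≤ a i ∧ d - x ≤ b i).card ≤ 1)
  no_consec : ¬ ∃ i, 1 ≤ i ∧ i + 1 ≤ K ∧
    a i + b i = d - 1 ∧ a (i + 1) + b (i + 1) = d - 1 ∧ a (i + 1) = a i + 1 ∧
    multCount K a (a i) = 1 ∧ multCount K a (a (i + 1)) = 1 ∧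
    multCount K b (b i) = 1 ∧ multCount K b (b (i + 1)) = 1

/-- The data of the inductive construction of Lemma C1 / Proposition A.1: the parameters
`k₁, g, m, N, T`, the componentwise degrees `d`, the positions `jpos` of the odd degrees,
and the `k×(2g−2)` matrix `a` of prescribed vanishing orders. -/
structure StdData where
  k1 : ℤ
  g : ℤ
  m : ℤ
  N : ℤ
  T : ℤ
  d : ℤ → ℤ
  jpos : ℤ → ℤ
  a : ℤ → ℤ → ℤ

namespace StdData

variable (S : StdData)

/-- `k = 2k₁ + 1`. -/
def k : ℤ := 2 * S.k1 + 1

/-- `n = 2m`. -/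
def n : ℤ := 2 * S.m

/-- `d̂ⱼ = dⱼ + 2N`. -/
def dhat (j : ℤ) : ℤ := S.d j + 2 * S.N

/-- The matrix `a` extended by the boundary columns: column `0` is `a(k)` and column
`2g−1` is the reverse of `a(k)`. -/
def aext (i j : ℤ) : ℤ :=
  if j = 0 then seqA i
  else if j = 2 * S.g - 1 then seqA (2 * S.k1 + 2 - i)
  else S.a i j

/-- `j_{t+1}`, with the convention that beyond `t = 2T` it is `g + 1`. -/
def jnext (t : ℤ) : ℤ := if t < 2 * S.T then S.jpos (t + 1) else S.g + 1

/-- The prescribed boundary column `c_{•,2g−1}` of length `k + n`: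
`(N+k₁, N+k₁−1, N+k₁−1, …, N, N, N−1−k₁, N−2−k₁, N−2−k₁, …, N−m−k₁, N−m−k₁, N−m−k₁−1)`. -/
def lastCol (i : ℤ) : ℤ :=
  if i ≤ 2 * S.k1 + 1 then S.N + S.k1 - i / 2
  else S.N - 1 - S.k1 - (i - (2 * S.k1 + 1)) / 2

/-- A `(k+n)×(2g−2)` matrix `c` extended by the boundary columns: column `0` is `a(k+n)`
and column `2g−1` is `lastCol`. -/
def cext (c : ℤ → ℤ → ℤ) (i j : ℤ) : ℤ :=
  if j = 0 then seqA i
  else if j = 2 * S.g - 1 then S.lastCol i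
  else c i j

/-- The number of `t ∈ {1,…,2T}` with `j_t < j`. -/
noncomputable def oddCountBelow (j : ℤ) : ℕ :=
  ((Finset.Icc (1 : ℤ) (2 * S.T)).filter fun t => S.jpos t < j).card

/-- The hypothesis package: the constraints on the parameters and the componentwise
degrees, together with `(g,k)`-standardness (s1)–(s6) of the matrix `a`. -/
structure Std : Prop where
  hk1 : 2 ≤ S.k1
  hg : 3 ≤ S.g
  hm : 1 ≤ S.m
  hN : S.k1 + S.m < S.N
  hT : 1 ≤ S.T
  hd_mem : ∀ j, 1 ≤ j → j ≤ S.g →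
    S.d j = 2 * S.g - 3 ∨ S.d j = 2 * S.g - 2 ∨ S.d j = 2 * S.g - 1
  hd_one : S.d 1 = 2 * S.g - 2
  hd_g : S.d S.g = 2 * S.g - 2
  hj_mono : ∀ t t', 1 ≤ t → t < t' → t' ≤ 2 * S.T → S.jpos t < S.jpos t'
  hj_range : ∀ t, 1 ≤ t → t ≤ 2 * S.T → 1 ≤ S.jpos t ∧ S.jpos t ≤ S.g
  hj_one : S.jpos 1 = 2
  hodd_iff : ∀ j, 1 ≤ j → j ≤ S.g →
    (Odd (S.d j) ↔ ∃ t, 1 ≤ t ∧ t ≤ 2 * S.T ∧ S.jpos t = j)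
  hd_odd : ∀ s, 1 ≤ s → s ≤ S.T →
    S.d (S.jpos (2 * s - 1)) = 2 * S.g - 1 ∧ S.d (S.jpos (2 * s)) = 2 * S.g - 3
  ha_nonneg : ∀ i j, 1 ≤ i → i ≤ S.k → 1 ≤ j → j ≤ 2 * S.g - 2 → 0 ≤ S.a i j
  hs1 : ∀ i j, 1 ≤ i → i ≤ S.k → 1 ≤ j → j ≤ S.g - 1 →
    S.a i (2 * j - 1) + S.a i (2 * j) = S.g - 1
  hs2 : ∀ j, 1 ≤ j → j ≤ S.g → S.d j = 2 * S.g - 2 →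
    CondI S.k (S.g - 1) (fun i => S.aext i (2 * j - 2)) (fun i => S.aext i (2 * j - 1))
  hs3a : ∀ j, 1 ≤ j → j ≤ S.g → S.d j = 2 * S.g - 1 →
    CondII S.k (S.g - 1) (fun i => S.aext i (2 * j - 2)) (fun i => S.aext i (2 * j - 1))
  hs3b : ∀ j, 1 ≤ j → j ≤ S.g → S.d j = 2 * S.g - 3 →
    CondII S.k (S.g - 2) (fun i => S.aext i (2 * j - 2)) (fun i => S.aext i (2 * j - 1))
  hs4 : S.a S.k 2 + S.a S.k 3 = S.g - 1
  hs5 : ∀ t, 1 ≤ t → t ≤ 2 * S.T →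
    S.aext S.k (2 * S.jpos t - 2) ≤ S.k1 + S.jpos t - 1 ∧
    (S.aext S.k (2 * S.jpos t - 2) = S.k1 + S.jpos t - 2 →
      Even t ∨
        S.aext S.k (2 * S.jpos t - 2) + S.aext S.k (2 * S.jpos t - 1) =
          (S.d (S.jpos t) - 1) / 2) ∧
    (S.aext S.k (2 * S.jpos t - 2) = S.k1 + S.jpos t - 1 →
      Odd t ∧ S.aext (S.k - 1) (2 * S.jpos t - 2) < S.aext S.k (2 * S.jpos t - 2))
  hs6 : ∀ t, 1 ≤ t → t ≤ 2 * S.T →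
    S.aext S.k (2 * S.jpos t - 1) = S.g - 1 - S.k1 - S.jpos t →
    ∀ j, S.jpos t < j → j < S.jnext t →
      S.aext S.k (2 * j - 2) + S.aext S.k (2 * j - 1) = S.g - 2

/-- Conditions (C1)–(C6) on a `(k+n)×(2g−2)` integer matrix `c`. -/
def CondC (c : ℤ → ℤ → ℤ) : Prop :=
  -- (C1): the first k rows of c equal â, i.e. a with N added in every odd-indexed column
  (∀ i j, 1 ≤ i → i ≤ S.k → 1 ≤ j → j ≤ 2 * S.g - 2 →
    c i j = S.a i j + if Odd j then S.N else 0) ∧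
  -- (C2)
  (∀ i j, 1 ≤ i → i ≤ S.k + S.n → 1 ≤ j → j ≤ S.g - 1 →
    c i (2 * j - 1) + c i (2 * j) = S.g + S.N - 1) ∧
  -- (C3)
  (∀ j, 1 ≤ j → j ≤ S.g → Even (S.d j) →
    CondI (S.k + S.n) (S.dhat j / 2)
      (fun i => S.cext c i (2 * j - 2)) (fun i => S.cext c i (2 * j - 1))) ∧
  -- (C4)
  (∀ j, 1 ≤ j → j ≤ S.g → Odd (S.d j) →
    CondII (S.k + S.n) ((S.dhat j - 1) / 2)
      (fun i => S.cext c i (2 * j - 2)) (fun i => S.cext c i (2 * j - 1))) ∧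
  -- (C5)
  (∀ i t, S.k + 1 ≤ i → i ≤ S.k + S.n → 1 ≤ t → t < 2 * S.T →
    (S.cext c i (2 * S.jpos t - 2) + S.cext c i (2 * S.jpos t - 1) =
        (S.dhat (S.jpos t) - 1) / 2 →
      S.cext c i (2 * S.jpos (t + 1) - 2) + S.cext c i (2 * S.jpos (t + 1) - 1) =
        (S.dhat (S.jpos (t + 1)) - 1) / 2 - 1) ∧
    (S.cext c i (2 * S.jpos t - 2) + S.cext c i (2 * S.jpos t - 1) =
        (S.dhat (S.jpos t) - 1) / 2 - 1 →
      S.cext c i (2 * S.jpos (t + 1) - 2) + S.cext c i (2 * S.jpos (t + 1) - 1) =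
        (S.dhat (S.jpos (t + 1)) - 1) / 2)) ∧
  -- (C6)
  c (S.k + S.n) 2 + c (S.k + S.n) 3 = (S.dhat 2 - 1) / 2

end StdData

open StdData in
/-- Lemma A.4: every `(k+n)×(2g−2)` integer matrix `c` satisfying conditions (C1)–(C6)
has all entries nonnegative. -/
theorem condC_entries_nonneg (S : StdData) (hS : S.Std) (c : ℤ → ℤ → ℤ)
    (hc : S.CondC c) :
    ∀ i j, 1 ≤ i → i ≤ S.k + S.n → 1 ≤ j → j ≤ 2 * S.g - 2 → 0 ≤ c i j := by
  obtain ⟨hC1, hC2, hC3, hC4, hC5, hC6⟩ := hc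
  have hk : S.k = 2 * S.k1 + 1 := rfl
  have hn : S.n = 2 * S.m := rfl
  have hk1 := hS.hk1
  have hg := hS.hg
  have hm := hS.hm
  have hN := hS.hN
  have hT := hS.hT
  -- unfolding `cext` inside the matrix
  have hce : ∀ (i J : ℤ), 1 ≤ J → J ≤ 2 * S.g - 2 → S.cext c i J = c i J := by
    intro i J h1 h2
    simp only [StdData.cext]
    rw [if_neg (by omega), if_neg (by omega)]
  have hcl : ∀ i : ℤ, S.cext c i (2 * S.g - 1) = S.lastCol i := by
    intro i
    simp only [StdData.cext]
    rw [if_neg (by omega)]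
    simp
  -- the alternation claim along the odd positions, for the last row, from (C5)/(C6)
  have hclaimN : ∀ (v : ℕ) (t : ℤ), t = 1 + (v : ℤ) → t ≤ 2 * S.T →
      (Odd t → S.cext c (S.k + S.n) (2 * S.jpos t - 2) +
          S.cext c (S.k + S.n) (2 * S.jpos t - 1) = (S.dhat (S.jpos t) - 1) / 2) ∧
      (Even t → S.cext c (S.k + S.n) (2 * S.jpos t - 2) +
          S.cext c (S.k + S.n) (2 * S.jpos t - 1) = (S.dhat (S.jpos t) - 1) / 2 - 1) := by
    intro v
    induction v with
    | zero =>
      intro t ht _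
      have ht1 : t = 1 := by push_cast at ht; omega
      subst ht1
      constructor
      · intro _
        rw [hS.hj_one]
        rw [show (2 * 2 - 2 : ℤ) = 2 by norm_num, show (2 * 2 - 1 : ℤ) = 3 by norm_num]
        rw [hce (S.k + S.n) 2 (by omega) (by omega), hce (S.k + S.n) 3 (by omega) (by omega)]
        exact hC6
      · intro hev
        exfalso
        rw [Int.even_iff] at hev
        omega
    | succ w ih =>
      intro t ht h2T
      push_cast at ht
      have ih' := ih (t - 1) (by omega) (by omega)
      have hC5' := hC5 (S.k + S.n) (t - 1) (by omega) le_rfl (by omega) (by omega)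
      rw [show t - 1 + 1 = t by ring] at hC5'
      rcases Int.even_or_odd (t - 1) with hte | hto
      · refine ⟨fun _ => hC5'.2 (ih'.2 hte), fun hev => ?_⟩
        exfalso
        rw [Int.even_iff] at hev hte
        omega
      · refine ⟨fun hodd1 => ?_, fun _ => hC5'.1 (ih'.1 hto)⟩
        exfalso
        rw [Int.odd_iff] at hodd1 hto
        omega
  have hclaim : ∀ t : ℤ, 1 ≤ t → t ≤ 2 * S.T →
      (Odd t → S.cext c (S.k + S.n) (2 * S.jpos t - 2) +
          S.cext c (S.k + S.n) (2 * S.jpos t - 1) = (S.dhat (S.jpos t) - 1) / 2) ∧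
      (Even t → S.cext c (S.k + S.n) (2 * S.jpos t - 2) +
          S.cext c (S.k + S.n) (2 * S.jpos t - 1) = (S.dhat (S.jpos t) - 1) / 2 - 1) := by
    intro t ht1 ht2
    have hcast : ((t - 1).toNat : ℤ) = t - 1 := Int.toNat_of_nonneg (by omega)
    exact hclaimN (t - 1).toNat t (by omega) ht2
  -- each telescoping term is nonnegative for the last row
  have hterm : ∀ j : ℤ, 2 ≤ j → j ≤ S.g →
      S.cext c (S.k + S.n) (2 * j - 2) + S.cext c (S.k + S.n) (2 * j - 1) ≤
        S.g + S.N - 1 := by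
    intro j hj2 hjg
    have hdh : S.dhat j = S.d j + 2 * S.N := rfl
    rcases hS.hd_mem j (by omega) (by omega) with hd | hd | hd
    · -- d j = 2g - 3
      have H : S.cext c (S.k + S.n) (2 * j - 2) + S.cext c (S.k + S.n) (2 * j - 1) ≤
          (S.dhat j - 1) / 2 + 1 :=
        (hC4 j (by omega) (by omega) ⟨S.g - 2, by rw [hd]; ring⟩).sum_le (S.k + S.n)
          (by omega) le_rfl
      omega
    · -- d j = 2g - 2
      have H : S.cext c (S.k + S.n) (2 * j - 2) + S.cext c (S.k + S.n) (2 * j - 1) ≤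
          S.dhat j / 2 :=
        (hC3 j (by omega) (by omega) ⟨S.g - 1, by rw [hd]; ring⟩).sum_le (S.k + S.n)
          (by omega) le_rfl
      omega
    · -- d j = 2g - 1 : use the alternation
      have hodd : Odd (S.d j) := ⟨S.g - 1, by rw [hd]; ring⟩
      obtain ⟨t, ht1, ht2, htj⟩ := (hS.hodd_iff j (by omega) (by omega)).mp hodd
      rcases Int.even_or_odd t with hte | hto
      · exfalso
        obtain ⟨s, hs⟩ := hte
        have hds := (hS.hd_odd s (by omega) (by omega)).2
        rw [show 2 * s = t by omega, htj] at hds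
        omega
      · have H := (hclaim t ht1 ht2).1 hto
        rw [htj] at H
        omega
  -- nonnegativity of the last row in odd columns, by downward induction
  have hQ : ∀ (v : ℕ) (j : ℤ), j = S.g - v → 1 ≤ j →
      0 ≤ S.cext c (S.k + S.n) (2 * j - 1) := by
    intro v
    induction v with
    | zero =>
      intro j hj _
      rw [show (2 * j - 1 : ℤ) = 2 * S.g - 1 by push_cast at hj; omega, hcl]
      simp only [StdData.lastCol]
      rw [if_neg (by omega)]
      omega
    | succ w ih =>
      intro j hj hj1
      push_cast at hj
      have hjg : j ≤ S.g - 1 := by omega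
      have e1' : S.cext c (S.k + S.n) (2 * j - 1) = c (S.k + S.n) (2 * j - 1) :=
        hce _ _ (by omega) (by omega)
      have e2' : S.cext c (S.k + S.n) (2 * j) = c (S.k + S.n) (2 * j) :=
        hce _ _ (by omega) (by omega)
      have h2 := hC2 (S.k + S.n) j (by omega) le_rfl hj1 (by omega)
      have ht := hterm (j + 1) (by omega) (by omega)
      rw [show (2 * (j + 1) - 2 : ℤ) = 2 * j by ring,
        show (2 * (j + 1) - 1 : ℤ) = 2 * j + 1 by ring] at ht
      have ihh := ih (j + 1) (by omega) (by omega)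
      rw [show (2 * (j + 1) - 1 : ℤ) = 2 * j + 1 by ring] at ihh
      omega
  have hQfinal : ∀ j : ℤ, 1 ≤ j → j ≤ S.g → 0 ≤ S.cext c (S.k + S.n) (2 * j - 1) := by
    intro j hj1 hjg
    have hcast : ((S.g - j).toNat : ℤ) = S.g - j := Int.toNat_of_nonneg (by omega)
    exact hQ (S.g - j).toNat j (by omega) hj1
  -- even columns
  have hpos_even : ∀ i j : ℤ, 1 ≤ i → i ≤ S.k + S.n → 1 ≤ j → j ≤ S.g - 1 →
      0 ≤ c i (2 * j) := by
    intro i j hi1 hi2 hj1 hj2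
    have hmono : ∀ i i', 1 ≤ i → i ≤ i' → i' ≤ S.k + S.n →
        S.cext c i (2 * (j + 1) - 2) ≤ S.cext c i' (2 * (j + 1) - 2) := by
      rcases hS.hd_mem (j + 1) (by omega) (by omega) with hd | hd | hd
      · exact (hC4 (j + 1) (by omega) (by omega) ⟨S.g - 2, by rw [hd]; ring⟩).mono
      · exact (hC3 (j + 1) (by omega) (by omega) ⟨S.g - 1, by rw [hd]; ring⟩).mono
      · exact (hC4 (j + 1) (by omega) (by omega) ⟨S.g - 1, by rw [hd]; ring⟩).mono
    have h1 := hmono 1 i le_rfl hi1 hi2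
    rw [show (2 * (j + 1) - 2 : ℤ) = 2 * j by ring] at h1
    rw [hce 1 (2 * j) (by omega) (by omega), hce i (2 * j) (by omega) (by omega)] at h1
    have hc1 := hC1 1 (2 * j) (by omega) (by omega) (by omega) (by omega)
    rw [if_neg (by rw [Int.odd_iff]; omega)] at hc1
    have ha := hS.ha_nonneg 1 (2 * j) (by omega) (by omega) (by omega) (by omega)
    omega
  -- odd columns
  have hpos_odd : ∀ i j : ℤ, 1 ≤ i → i ≤ S.k + S.n → 1 ≤ j → j ≤ S.g - 1 →
      0 ≤ c i (2 * j - 1) := by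
    intro i j hi1 hi2 hj1 hj2
    have hanti : ∀ i i', 1 ≤ i → i ≤ i' → i' ≤ S.k + S.n →
        S.cext c i' (2 * j - 1) ≤ S.cext c i (2 * j - 1) := by
      rcases hS.hd_mem j (by omega) (by omega) with hd | hd | hd
      · exact (hC4 j (by omega) (by omega) ⟨S.g - 2, by rw [hd]; ring⟩).anti
      · exact (hC3 j (by omega) (by omega) ⟨S.g - 1, by rw [hd]; ring⟩).anti
      · exact (hC4 j (by omega) (by omega) ⟨S.g - 1, by rw [hd]; ring⟩).anti
    have h1 := hanti i (S.k + S.n) hi1 hi2 le_rfl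
    have h0 := hQfinal j hj1 (by omega)
    rw [hce i (2 * j - 1) (by omega) (by omega)] at h1
    omega
  intro i j hi1 hi2 hj1 hj2
  rcases Int.even_or_odd j with ⟨j0, hj0⟩ | ⟨j0, hj0⟩
  · rw [show j = 2 * j0 by omega]
    exact hpos_even i j0 hi1 hi2 (by omega) (by omega)
  · rw [show j = 2 * (j0 + 1) - 1 by omega]
    exact hpos_odd i (j0 + 1) hi1 hi2 (by omega) (by omega)

end BFM
end

section
/- Let c be a (k+n)×(2g-2) integer matrix satisfying conditions (C1)-(C6) and let t ∈ {1,...,2T}. Write e = c_{k+1, 2j_t-2} and f = c_{k+1, 2j_t-1}. Then the last n entries of column 2j_t-2, i.e. (c_{i,2j_t-2}) for i = k+1,...,k+n, equal (e, e+1, e+1, ..., e+m-1, e+m-1, e+m) if t is odd and (e, e, e+1, e+1, ..., e+m-1, e+m-1) if t is even; and the last n entries of column 2j_t-1, i.e. (c_{i,2j_t-1}) for i = k+1,...,k+n, equal (f, f, f-1, f-1, ..., f-m+1, f-m+1) if t is odd and (f, f-1, f-1, ..., f-m+1, f-m+1, f-m) if t is even. (This is the combination of Lemma A.2 and Corollary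 A.3 describing the pattern of the new rows of c^Γ at the columns of odd componentwise degree.) -/
namespace BFM

section AuxLemmas

lemma multCount_ge_three {K : ℤ} {a : ℤ → ℤ} {x : ℤ} {i1 i2 i3 : ℤ}
    (h1 : 1 ≤ i1) (h12 : i1 < i2) (h23 : i2 < i3) (h3 : i3 ≤ K)
    (e1 : a i1 = x) (e2 : a i2 = x) (e3 : a i3 = x) : 3 ≤ multCount K a x := by
  have hsub : ({i1, i2, i3} : Finset ℤ) ⊆ (Finset.Icc (1:ℤ) K).filter fun i => a i = x := by
    intro i hi
    simp only [Finset.mem_insert, Finset.mem_singleton] at hi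
    rcases hi with rfl | rfl | rfl <;>
      · simp only [Finset.mem_filter, Finset.mem_Icc]
        refine ⟨⟨by omega, by omega⟩, by assumption⟩
  have hcard : ({i1, i2, i3} : Finset ℤ).card = 3 := by
    rw [Finset.card_insert_of_notMem (by simp; omega),
        Finset.card_insert_of_notMem (by simp; omega), Finset.card_singleton]
  calc (3:ℕ) = ({i1,i2,i3} : Finset ℤ).card := hcard.symm
    _ ≤ _ := Finset.card_le_card hsub

lemma two_le_card_filter {K : ℤ} {P : ℤ → Prop} [DecidablePred P] {i1 i2 : ℤ}
    (h1 : 1 ≤ i1) (h12 : i1 < i2) (h2 : i2 ≤ K) (p1 : P i1) (p2 : P i2) :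
    2 ≤ ((Finset.Icc (1:ℤ) K).filter fun i => P i).card := by
  have hsub : ({i1, i2} : Finset ℤ) ⊆ (Finset.Icc (1:ℤ) K).filter fun i => P i := by
    intro i hi
    simp only [Finset.mem_insert, Finset.mem_singleton] at hi
    rcases hi with rfl | rfl <;>
      · simp only [Finset.mem_filter, Finset.mem_Icc]
        exact ⟨⟨by omega, by omega⟩, by assumption⟩
  have hcard : ({i1, i2} : Finset ℤ).card = 2 := by
    rw [Finset.card_insert_of_notMem (by simp; omega), Finset.card_singleton]
  calc (2:ℕ) = ({i1,i2} : Finset ℤ).card := hcard.symm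
    _ ≤ _ := Finset.card_le_card hsub

namespace StdData

variable {S : StdData} {c : ℤ → ℤ → ℤ}

lemma k_eq (S : StdData) : S.k = 2*S.k1+1 := rfl
lemma n_eq (S : StdData) : S.n = 2*S.m := rfl

lemma jpos_mono_le (hS : S.Std) {t t' : ℤ} (h1 : 1 ≤ t) (h : t ≤ t') (h2 : t' ≤ 2*S.T) :
    S.jpos t ≤ S.jpos t' := by
  rcases eq_or_lt_of_le h with rfl | h
  · exact le_rfl
  · exact (hS.hj_mono t t' h1 h h2).le

lemma jpos_ge_two (hS : S.Std) {t : ℤ} (h1 : 1 ≤ t) (h2 : t ≤ 2*S.T) : 2 ≤ S.jpos t := by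
  have h := jpos_mono_le hS le_rfl h1 h2
  rwa [hS.hj_one] at h

lemma d_jpos_odd (hS : S.Std) {t : ℤ} (h1 : 1 ≤ t) (h2 : t ≤ 2*S.T) (ho : Odd t) :
    S.d (S.jpos t) = 2*S.g-1 := by
  obtain ⟨s, hs⟩ := ho
  have h := (hS.hd_odd (s+1) (by omega) (by omega)).1
  have he : 2*(s+1)-1 = t := by omega
  rwa [he] at h

lemma d_jpos_even (hS : S.Std) {t : ℤ} (h1 : 1 ≤ t) (h2 : t ≤ 2*S.T) (he : Even t) :
    S.d (S.jpos t) = 2*S.g-3 := by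
  obtain ⟨s, hs⟩ := he
  have h := (hS.hd_odd s (by omega) (by omega)).2
  have he2 : 2*s = t := by omega
  rwa [he2] at h

lemma d_odd_at_jpos (hS : S.Std) {t : ℤ} (h1 : 1 ≤ t) (h2 : t ≤ 2*S.T) :
    Odd (S.d (S.jpos t)) := by
  rcases Int.even_or_odd t with he | ho
  · rw [d_jpos_even hS h1 h2 he]; exact ⟨S.g-2, by ring⟩
  · rw [d_jpos_odd hS h1 h2 ho]; exact ⟨S.g-1, by ring⟩

lemma jpos_le_g (hS : S.Std) {t : ℤ} (h1 : 1 ≤ t) (h2 : t ≤ 2*S.T) :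
    S.jpos t ≤ S.g - 1 := by
  have hr := (hS.hj_range t h1 h2).2
  rcases eq_or_lt_of_le hr with he | h
  · exfalso
    have hodd := d_odd_at_jpos hS h1 h2
    rw [he, hS.hd_g] at hodd
    rcases hodd with ⟨s, hs⟩; omega
  · omega

lemma d_even_col (hS : S.Std) {j : ℤ} (hj1 : 1 ≤ j) (hj2 : j ≤ S.g)
    (h : ∀ t, 1 ≤ t → t ≤ 2*S.T → S.jpos t ≠ j) : S.d j = 2*S.g-2 := by
  rcases hS.hd_mem j hj1 hj2 with h1 | h2 | h3
  · exfalso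
    obtain ⟨t, ht1, ht2, ht3⟩ := (hS.hodd_iff j hj1 hj2).1 ⟨S.g-2, by omega⟩
    exact h t ht1 ht2 ht3
  · exact h2
  · exfalso
    obtain ⟨t, ht1, ht2, ht3⟩ := (hS.hodd_iff j hj1 hj2).1 ⟨S.g-1, by omega⟩
    exact h t ht1 ht2 ht3

lemma no_jpos_between (hS : S.Std) {t j : ℤ} (ht1 : 1 ≤ t) (ht2 : t+1 ≤ 2*S.T)
    (h1 : S.jpos t < j) (h2 : j < S.jpos (t+1)) :
    ∀ u, 1 ≤ u → u ≤ 2*S.T → S.jpos u ≠ j := by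
  intro u hu1 hu2 he
  rcases le_or_gt u t with h | h
  · have := jpos_mono_le hS hu1 h (by omega); omega
  · have := jpos_mono_le hS (by omega : (1:ℤ) ≤ t+1) (by omega : t+1 ≤ u) hu2; omega

lemma cext_int (S : StdData) (c : ℤ → ℤ → ℤ) (hg : 3 ≤ S.g) {i j : ℤ}
    (hj1 : 1 ≤ j) (hj2 : j ≤ 2*S.g-2) : S.cext c i j = c i j := by
  unfold StdData.cext
  rw [if_neg (by omega), if_neg (by omega)]

lemma cext_zero (S : StdData) (c : ℤ → ℤ → ℤ) (i : ℤ) : S.cext c i 0 = seqA i := by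
  unfold StdData.cext
  rw [if_pos rfl]

lemma aext_int (S : StdData) (hg : 3 ≤ S.g) {i j : ℤ}
    (hj1 : 1 ≤ j) (hj2 : j ≤ 2*S.g-2) : S.aext i j = S.a i j := by
  unfold StdData.aext
  rw [if_neg (by omega), if_neg (by omega)]

lemma aext_zero (S : StdData) (i : ℤ) : S.aext i 0 = seqA i := by
  unfold StdData.aext
  rw [if_pos rfl]

lemma crow_a (hS : S.Std) (hc : S.CondC c) {i j : ℤ} (hi1 : 1 ≤ i) (hik : i ≤ S.k)
    (hj1 : 1 ≤ j) (hj2 : j ≤ S.g - 1) :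
    S.cext c i (2*j-2) = S.aext i (2*j-2) := by
  have hg := hS.hg
  by_cases hj : j = 1
  · subst hj; norm_num
    rw [cext_zero, aext_zero]
  · rw [cext_int S c hg (by omega) (by omega), aext_int S hg (by omega) (by omega)]
    have h := hc.1 i (2*j-2) hi1 hik (by omega) (by omega)
    rw [h, if_neg (by rintro ⟨s, hs⟩; omega)]
    ring

lemma crow_b (hS : S.Std) (hc : S.CondC c) {i j : ℤ} (hi1 : 1 ≤ i) (hik : i ≤ S.k)
    (hj1 : 1 ≤ j) (hj2 : j ≤ S.g - 1) :
    S.cext c i (2*j-1) = S.aext i (2*j-1) + S.N := by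
  have hg := hS.hg
  rw [cext_int S c hg (by omega) (by omega), aext_int S hg (by omega) (by omega)]
  have h := hc.1 i (2*j-1) hi1 hik (by omega) (by omega)
  rw [h, if_pos ⟨j-1, by ring⟩]

lemma c2' (hS : S.Std) (hc : S.CondC c) {i j : ℤ} (hi1 : 1 ≤ i) (hi2 : i ≤ S.k+S.n)
    (hj1 : 1 ≤ j) (hj2 : j ≤ S.g-1) :
    S.cext c i (2*j-1) + S.cext c i (2*j) = S.g + S.N - 1 := by
  have hg := hS.hg
  rw [cext_int S c hg (by omega) (by omega), cext_int S c hg (by omega) (by omega)]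
  exact hc.2.1 i j hi1 hi2 hj1 hj2

lemma bigI (hS : S.Std) (hc : S.CondC c) {j : ℤ} (hj1 : 1 ≤ j) (hj2 : j ≤ S.g)
    (hd : S.d j = 2*S.g-2) :
    CondI (S.k+S.n) (S.g+S.N-1)
      (fun i => S.cext c i (2*j-2)) (fun i => S.cext c i (2*j-1)) := by
  have h := hc.2.2.1 j hj1 hj2 (by rw [hd]; exact ⟨S.g-1, by ring⟩)
  have hD : S.dhat j / 2 = S.g+S.N-1 := by unfold StdData.dhat; rw [hd]; omega
  rwa [hD] at h

lemma bigII (hS : S.Std) (hc : S.CondC c) {t : ℤ} (ht1 : 1 ≤ t) (ht2 : t ≤ 2*S.T) :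
    CondII (S.k+S.n) ((S.dhat (S.jpos t) - 1)/2)
      (fun i => S.cext c i (2*S.jpos t-2)) (fun i => S.cext c i (2*S.jpos t-1)) :=
  hc.2.2.2.1 _ (by have := jpos_ge_two hS ht1 ht2; omega) (hS.hj_range t ht1 ht2).2
    (d_odd_at_jpos hS ht1 ht2)

lemma Dval_odd (hS : S.Std) {t : ℤ} (h1 : 1 ≤ t) (h2 : t ≤ 2*S.T) (ho : Odd t) :
    (S.dhat (S.jpos t) - 1)/2 = S.g+S.N-1 := by
  unfold StdData.dhat; rw [d_jpos_odd hS h1 h2 ho]; omega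

lemma Dval_even (hS : S.Std) {t : ℤ} (h1 : 1 ≤ t) (h2 : t ≤ 2*S.T) (he : Even t) :
    (S.dhat (S.jpos t) - 1)/2 = S.g+S.N-2 := by
  unfold StdData.dhat; rw [d_jpos_even hS h1 h2 he]; omega

lemma small_dup (hS : S.Std) {t : ℤ} (ht1 : 1 ≤ t) (ht2 : t ≤ 2*S.T) :
    ∃ i0, 1 ≤ i0 ∧ i0 ≤ S.k - 1 ∧
      S.aext i0 (2*S.jpos t-2) = S.aext (i0+1) (2*S.jpos t-2) ∧
      S.aext i0 (2*S.jpos t-1) = S.aext (i0+1) (2*S.jpos t-1) := by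
  have hjl : 1 ≤ S.jpos t := by have := jpos_ge_two hS ht1 ht2; omega
  have hjg := (hS.hj_range t ht1 ht2).2
  rcases Int.even_or_odd t with he | ho
  · obtain ⟨i0, h1, h2, h3, h4, h5, _, _⟩ :=
      (hS.hs3b _ hjl hjg (d_jpos_even hS ht1 ht2 he)).exists_istar
    exact ⟨i0, h1, by omega, h3, by omega⟩
  · obtain ⟨i0, h1, h2, h3, h4, h5, _, _⟩ :=
      (hS.hs3a _ hjl hjg (d_jpos_odd hS ht1 ht2 ho)).exists_istar
    exact ⟨i0, h1, by omega, h3, by omega⟩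

lemma newrow_even_sum (hS : S.Std) (hc : S.CondC c) {j : ℤ} (hj1 : 1 ≤ j)
    (hj2 : j ≤ S.g-1) (hd : S.d j = 2*S.g-2) {i : ℤ} (hi1 : S.k+1 ≤ i) (hi2 : i ≤ S.k+S.n) :
    S.cext c i (2*j-2) + S.cext c i (2*j-1) = S.g+S.N-2 := by
  have hg := hS.hg
  have hk1 := hS.hk1
  have hkk := S.k_eq
  have hbig := bigI hS hc hj1 (by omega) hd
  have hsm := hS.hs2 j hj1 (by omega) hd
  obtain ⟨u, hu, _⟩ := hsm.special
  obtain ⟨hu1, hu12, hu2, hus1, hus2⟩ := hu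
  dsimp only at hus1 hus2
  have hu1k : u.1 ≤ S.k := by omega
  have tA1 : S.cext c u.1 (2*j-2) = S.aext u.1 (2*j-2) := crow_a hS hc (by omega) hu1k hj1 hj2
  have tB1 : S.cext c u.1 (2*j-1) = S.aext u.1 (2*j-1) + S.N := crow_b hS hc (by omega) hu1k hj1 hj2
  have tA2 : S.cext c u.2 (2*j-2) = S.aext u.2 (2*j-2) := crow_a hS hc (by omega) hu2 hj1 hj2
  have tB2 : S.cext c u.2 (2*j-1) = S.aext u.2 (2*j-1) + S.N := crow_b hS hc (by omega) hu2 hj1 hj2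
  have hle := hbig.sum_le i (by omega) hi2
  have hge := hbig.le_sum i (by omega) hi2
  by_contra hne
  have hsig : S.cext c i (2*j-2) + S.cext c i (2*j-1) = S.g+S.N-1 := by omega
  obtain ⟨p, hp, hup⟩ := hbig.special
  have hbu : IsSpecialPair (S.k+S.n) (S.g+S.N-1)
      (fun i => S.cext c i (2*j-2)) (fun i => S.cext c i (2*j-1)) u.1 u.2 := by
    refine ⟨hu1, hu12, by omega, ?_, ?_⟩ <;> dsimp only
    · rw [tA1, tB1]; omega
    · rw [tA2, tB2]; omega
  have hbu2 : IsSpecialPair (S.k+S.n) (S.g+S.N-1)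
      (fun i => S.cext c i (2*j-2)) (fun i => S.cext c i (2*j-1)) u.1 i := by
    refine ⟨hu1, by omega, hi2, ?_, ?_⟩ <;> dsimp only
    · rw [tA1, tB1]; omega
    · exact hsig
  have e1 := hup (u.1, u.2) hbu
  have e2 := hup (u.1, i) hbu2
  have : u.2 = i := by
    have := e1.trans e2.symm
    exact (Prod.ext_iff.1 this).2
  omega

lemma newrow_col2 (hS : S.Std) (hc : S.CondC c) {i : ℤ} (hi1 : S.k+1 ≤ i) (hi2 : i ≤ S.k+S.n) :
    S.cext c i 2 = seqA i + 1 := by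
  have hg := hS.hg
  have hkk := S.k_eq
  have hk1 := hS.hk1
  have h1 : S.cext c i 0 + S.cext c i 1 = S.g+S.N-2 := by
    have := newrow_even_sum (j:=1) hS hc (by omega) (by omega) hS.hd_one hi1 hi2
    norm_num at this
    exact this
  have h2 : S.cext c i 1 + S.cext c i 2 = S.g+S.N-1 := by
    have := c2' (j:=1) hS hc (by omega) hi2 le_rfl (by omega)
    norm_num at this
    exact this
  have h0 : S.cext c i 0 = seqA i := cext_zero S c i
  omega

end StdData

end AuxLemmas


lemma pair_force {K x y : ℤ} (a b : ℤ → ℤ) {istar : ℤ}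
    (hpair : ∀ x' y' : ℤ, (x', y') ≠ (a istar, b istar) →
      ((Finset.Icc (1 : ℤ) K).filter fun i => a i = x' ∧ b i = y').card ≤ 1)
    (i1 i2 : ℤ) (e1a : a i1 = x) (e1b : b i1 = y) (e2a : a i2 = x) (e2b : b i2 = y)
    (h1 : 1 ≤ i1) (h12 : i1 < i2) (h2 : i2 ≤ K) :
    x = a istar ∧ y = b istar := by
  by_contra hcon
  have hne : ((x:ℤ), (y:ℤ)) ≠ (a istar, b istar) := by
    intro h
    exact hcon ⟨(Prod.ext_iff.1 h).1, (Prod.ext_iff.1 h).2⟩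
  have hcard := hpair x y hne
  have hsub : ({i1, i2} : Finset ℤ) ⊆
      (Finset.Icc (1:ℤ) K).filter fun i => a i = x ∧ b i = y := by
    intro z hz
    simp only [Finset.mem_insert, Finset.mem_singleton] at hz
    rcases hz with rfl | rfl
    · exact Finset.mem_filter.2 ⟨Finset.mem_Icc.2 ⟨by omega, by omega⟩, e1a, e1b⟩
    · exact Finset.mem_filter.2 ⟨Finset.mem_Icc.2 ⟨by omega, by omega⟩, e2a, e2b⟩
  have hc2 := Finset.card_le_card hsub
  have hc3 : ({i1, i2} : Finset ℤ).card = 2 := by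
    rw [Finset.card_insert_of_notMem (by simp; omega), Finset.card_singleton]
  omega

namespace StdData

variable {S : StdData} {c : ℤ → ℤ → ℤ}

lemma aext_two_eq (hS : S.Std) : S.aext S.k 2 = S.k1 + 1 := by
  have hg := hS.hg
  have hk1 := hS.hk1
  have hT := hS.hT
  have hkk := S.k_eq
  have hd2 : S.d 2 = 2*S.g-1 := by
    have h := d_jpos_odd hS (t:=1) le_rfl (by omega) ⟨0, by ring⟩
    rwa [hS.hj_one] at h
  have hsm : CondII S.k (S.g-1) (fun i => S.aext i 2) (fun i => S.aext i 3) := by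
    have h := hS.hs3a 2 (by omega) (by omega) hd2
    norm_num at h
    exact h
  have hlow : ∀ s : ℤ, 0 ≤ s → (s ≤ S.k1 → s ≤ S.aext (2*s+1) 2) := by
    refine Int.le_induction ?_ ?_
    · intro _
      have h := hS.ha_nonneg 1 2 (by omega) (by omega) (by omega) (by omega)
      norm_num
      rw [aext_int S hg (by omega) (by omega)]
      exact h
    · intro s hs ih hsk
      have h1 := ih (by omega)
      by_contra hlt
      push_neg at hlt
      have e1 : S.aext (2*s+1) 2 ≤ S.aext (2*s+2) 2 :=
        hsm.mono _ _ (by omega) (by omega) (by omega)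
      have e2 : S.aext (2*s+2) 2 ≤ S.aext (2*s+3) 2 :=
        hsm.mono _ _ (by omega) (by omega) (by omega)
      rw [(by ring : 2*(s+1)+1 = 2*s+3)] at hlt
      have v1 : S.aext (2*s+1) 2 = s := by omega
      have v2 : S.aext (2*s+2) 2 = s := by omega
      have v3 : S.aext (2*s+3) 2 = s := by omega
      have h3 := multCount_ge_three (K := S.k) (a := fun i => S.aext i 2) (x := s)
        (i1 := 2*s+1) (i2 := 2*s+2) (i3 := 2*s+3)
        (by omega) (by omega) (by omega) (by omega) v1 v2 v3
      have h4 := hsm.a_mult s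
      omega
  have hlowk : S.k1 ≤ S.aext S.k 2 := by
    have h := hlow S.k1 (by omega) le_rfl
    rw [hkk]
    exact h
  have hup : S.aext S.k 2 ≤ S.k1 + 1 := by
    have h := (hS.hs5 1 le_rfl (by omega)).1
    rw [hS.hj_one] at h
    norm_num at h
    omega
  suffices hne : S.aext S.k 2 ≠ S.k1 by omega
  intro hK
  have hICI : CondI S.k (S.g-1) (fun i => S.aext i 0) (fun i => S.aext i 1) := by
    have h := hS.hs2 1 (by omega) (by omega) hS.hd_one
    norm_num at h
    exact h
  have hsk : S.aext S.k 0 + S.aext S.k 1 = S.g - 1 := by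
    have hs1k : S.a S.k 1 + S.a S.k 2 = S.g - 1 := by
      have h := hS.hs1 S.k 1 (by omega) (by omega) (by omega) (by omega)
      norm_num at h
      exact h
    have e0 : S.aext S.k 0 = seqA S.k := aext_zero S S.k
    have e1 : S.aext S.k 1 = S.a S.k 1 := aext_int S hg (by omega) (by omega)
    have e2 : S.aext S.k 2 = S.a S.k 2 := aext_int S hg (by omega) (by omega)
    have hseq : seqA S.k = S.k1 := by unfold seqA; omega
    omega
  obtain ⟨p, hp, hup'⟩ := hICI.special
  obtain ⟨hp1, hp12, hp2, hps1, hps2⟩ := hp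
  have hps1' : S.aext p.1 0 + S.aext p.1 1 = S.g - 1 := hps1
  have hkp2 : S.k = p.2 := by
    rcases eq_or_lt_of_le hp2 with he | hlt2
    · exact he.symm
    · exfalso
      have hsp : IsSpecialPair S.k (S.g-1) (fun i => S.aext i 0) (fun i => S.aext i 1)
          p.1 S.k := ⟨hp1, by omega, le_rfl, hps1, hsk⟩
      have h := hup' (p.1, S.k) hsp
      have h2 : S.k = p.2 := (Prod.ext_iff.1 h).2
      omega
  have hpk1 : p.1 < S.k := by omega
  have hrow : ∀ i, 1 ≤ i → i ≤ S.k → i ≠ p.1 → i ≠ S.k →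
      S.aext i 0 + S.aext i 1 = S.g - 2 := by
    intro i h1 h2 h3 h4
    have hle : S.aext i 0 + S.aext i 1 ≤ S.g - 1 := hICI.sum_le i h1 h2
    have hge : S.g - 1 - 1 ≤ S.aext i 0 + S.aext i 1 := hICI.le_sum i h1 h2
    by_contra hne2
    have hσ : S.aext i 0 + S.aext i 1 = S.g - 1 := by omega
    rcases lt_trichotomy i p.1 with hh | hh | hh
    · have h := hup' (i, p.1) ⟨h1, hh, by omega, hσ, hps1⟩
      have : i = p.1 := (Prod.ext_iff.1 h).1
      omega
    · exact h3 hh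
    · have h := hup' (p.1, i) ⟨hp1, hh, h2, hps1, hσ⟩
      have : i = p.2 := (Prod.ext_iff.1 h).2
      omega
  have hval : ∀ i, 1 ≤ i → i ≤ S.k → i ≠ p.1 → i ≠ S.k → S.aext i 2 = seqA i + 1 := by
    intro i h1 h2 h3 h4
    have hr := hrow i h1 h2 h3 h4
    have hs1i : S.a i 1 + S.a i 2 = S.g - 1 := by
      have h := hS.hs1 i 1 h1 h2 (by omega) (by omega)
      norm_num at h
      exact h
    have e0 : S.aext i 0 = seqA i := aext_zero S i
    have e1 : S.aext i 1 = S.a i 1 := aext_int S hg (by omega) (by omega)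
    have e2 : S.aext i 2 = S.a i 2 := aext_int S hg (by omega) (by omega)
    omega
  have hvalu : S.aext p.1 2 = seqA p.1 := by
    have hs1u : S.a p.1 1 + S.a p.1 2 = S.g - 1 := by
      have h := hS.hs1 p.1 1 hp1 (by omega) (by omega) (by omega)
      norm_num at h
      exact h
    have e0 : S.aext p.1 0 = seqA p.1 := aext_zero S p.1
    have e1 : S.aext p.1 1 = S.a p.1 1 := aext_int S hg (by omega) (by omega)
    have e2 : S.aext p.1 2 = S.a p.1 2 := aext_int S hg (by omega) (by omega)
    omega
  rcases (by omega : p.1 ≤ 2*S.k1 - 2 ∨ p.1 = 2*S.k1-1 ∨ p.1 = 2*S.k1) with hc1 | hc2 | hc3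
  · have v1 : S.aext (2*S.k1-1) 2 = S.k1 := by
      have h := hval (2*S.k1-1) (by omega) (by omega) (by omega) (by omega)
      have hsq : seqA (2*S.k1-1) = S.k1-1 := by unfold seqA; omega
      omega
    have v2 : S.aext (2*S.k1) 2 = S.k1 := by
      have h := hval (2*S.k1) (by omega) (by omega) (by omega) (by omega)
      have hsq : seqA (2*S.k1) = S.k1-1 := by unfold seqA; omega
      omega
    have v3 : S.aext S.k 2 = S.k1 := hK
    have h3 := multCount_ge_three (K := S.k) (a := fun i => S.aext i 2) (x := S.k1)
      (i1 := 2*S.k1-1) (i2 := 2*S.k1) (i3 := S.k)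
      (by omega) (by omega) (by omega) (by omega) v1 v2 v3
    have h4 := hsm.a_mult S.k1
    omega
  · have v1 : S.aext (2*S.k1-3) 2 = S.k1-1 := by
      have h := hval (2*S.k1-3) (by omega) (by omega) (by omega) (by omega)
      have hsq : seqA (2*S.k1-3) = S.k1-2 := by unfold seqA; omega
      omega
    have v2 : S.aext (2*S.k1-2) 2 = S.k1-1 := by
      have h := hval (2*S.k1-2) (by omega) (by omega) (by omega) (by omega)
      have hsq : seqA (2*S.k1-2) = S.k1-2 := by unfold seqA; omega
      omega
    have v3 : S.aext (2*S.k1-1) 2 = S.k1-1 := by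
      rw [hc2] at hvalu
      have hsq : seqA (2*S.k1-1) = S.k1-1 := by unfold seqA; omega
      omega
    have h3 := multCount_ge_three (K := S.k) (a := fun i => S.aext i 2) (x := S.k1-1)
      (i1 := 2*S.k1-3) (i2 := 2*S.k1-2) (i3 := 2*S.k1-1)
      (by omega) (by omega) (by omega) (by omega) v1 v2 v3
    have h4 := hsm.a_mult (S.k1-1)
    omega
  · have v1 : S.aext (2*S.k1-1) 2 = S.k1 := by
      have h := hval (2*S.k1-1) (by omega) (by omega) (by omega) (by omega)
      have hsq : seqA (2*S.k1-1) = S.k1-1 := by unfold seqA; omega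
      omega
    have v2 : S.aext (2*S.k1) 2 = S.k1-1 := by
      rw [hc3] at hvalu
      have hsq : seqA (2*S.k1) = S.k1-1 := by unfold seqA; omega
      omega
    have h := hsm.mono (2*S.k1-1) (2*S.k1) (by omega) (by omega) (by omega)
    omega

lemma aprev_le (hS : S.Std) : S.aext (S.k-1) 2 ≤ S.k1 := by
  have hT := hS.hT
  have h3 := (hS.hs5 1 le_rfl (by omega)).2.2
  rw [hS.hj_one] at h3
  norm_num at h3
  have h := h3 (by rw [aext_two_eq hS]; omega)
  rw [aext_two_eq hS] at h
  omega

lemma sigma_first (hS : S.Std) (hc : S.CondC c) :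
    S.cext c (S.k+1) 2 + S.cext c (S.k+1) 3 = S.g+S.N-2 := by
  have hg := hS.hg
  have hk1 := hS.hk1
  have hT := hS.hT
  have hm := hS.hm
  have hkk := S.k_eq
  have hnn := S.n_eq
  have hbig0 := bigII hS hc (t:=1) le_rfl (by omega)
  rw [Dval_odd hS le_rfl (by omega) ⟨0, by ring⟩, hS.hj_one] at hbig0
  norm_num at hbig0
  have hak : S.cext c S.k 2 = S.k1+1 := by
    have h := crow_a (j:=2) hS hc (by omega) le_rfl (by omega) (by omega)
    norm_num at h
    rw [h, aext_two_eq hS]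
  have hsk : S.cext c S.k 2 + S.cext c S.k 3 = S.g+S.N-1 := by
    have h2 := crow_a (j:=2) hS hc (by omega) le_rfl (by omega) (by omega)
    have h3 := crow_b (j:=2) hS hc (by omega) le_rfl (by omega) (by omega)
    norm_num at h2 h3
    have e2 : S.aext S.k 2 = S.a S.k 2 := aext_int S hg (by omega) (by omega)
    have e3 : S.aext S.k 3 = S.a S.k 3 := aext_int S hg (by omega) (by omega)
    have h4 := hS.hs4
    omega
  have hak1 : S.cext c (S.k+1) 2 = S.k1+1 := by
    have h := newrow_col2 (i := S.k+1) hS hc (by omega) (by omega)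
    have hsq : seqA (S.k+1) = S.k1 := by unfold seqA; omega
    omega
  have hle : S.cext c (S.k+1) 2 + S.cext c (S.k+1) 3 ≤ (S.g+S.N-1) + 1 :=
    hbig0.sum_le (S.k+1) (by omega) (by omega)
  have hge : (S.g+S.N-1) - 1 ≤ S.cext c (S.k+1) 2 + S.cext c (S.k+1) 3 :=
    hbig0.le_sum (S.k+1) (by omega) (by omega)
  have hanti : S.cext c (S.k+1) 3 ≤ S.cext c S.k 3 :=
    hbig0.anti S.k (S.k+1) (by omega) (by omega) (by omega)
  by_contra hne
  have hσ : S.cext c (S.k+1) 2 + S.cext c (S.k+1) 3 = S.g+S.N-1 := by omega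
  obtain ⟨istar, hi1, hi2, haeq, hsa, hsb, hpair, hcnt⟩ := hbig0.exists_istar
  have ebk : S.cext c S.k 3 = S.g+S.N-2-S.k1 := by omega
  have ebk1 : S.cext c (S.k+1) 3 = S.g+S.N-2-S.k1 := by omega
  have hf1 := pair_force (fun i => S.cext c i 2) (fun i => S.cext c i 3) hpair S.k (S.k+1) hak ebk hak1 ebk1 (by omega) (by omega) (by omega)
  obtain ⟨i0, h01, h0k, hea, heb⟩ := small_dup hS (t:=1) le_rfl (by omega)
  rw [hS.hj_one] at hea heb
  norm_num at hea heb
  have t1 : S.cext c i0 2 = S.aext i0 2 := by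
    have h := crow_a (j:=2) (i := i0) hS hc (by omega) (by omega) (by omega) (by omega)
    norm_num at h
    exact h
  have t2 : S.cext c (i0+1) 2 = S.aext (i0+1) 2 := by
    have h := crow_a (j:=2) (i := i0+1) hS hc (by omega) (by omega) (by omega) (by omega)
    norm_num at h
    exact h
  have t3 : S.cext c i0 3 = S.aext i0 3 + S.N := by
    have h := crow_b (j:=2) (i := i0) hS hc (by omega) (by omega) (by omega) (by omega)
    norm_num at h
    exact h
  have t4 : S.cext c (i0+1) 3 = S.aext (i0+1) 3 + S.N := by
    have h := crow_b (j:=2) (i := i0+1) hS hc (by omega) (by omega) (by omega) (by omega)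
    norm_num at h
    exact h
  have hf2 := pair_force (fun i => S.cext c i 2) (fun i => S.cext c i 3) hpair i0 (i0+1)
    (rfl : S.cext c i0 2 = S.cext c i0 2) (rfl : S.cext c i0 3 = S.cext c i0 3)
    (by show S.cext c (i0+1) 2 = S.cext c i0 2; rw [t1, t2]; exact hea.symm)
    (by show S.cext c (i0+1) 3 = S.cext c i0 3; rw [t3, t4, heb])
    h01 (by omega) (by omega)
  have hx0 : S.cext c i0 2 = S.k1+1 := by
    have := hf1.1
    have := hf2.1
    omega
  have hm1 : S.cext c i0 2 ≤ S.cext c (S.k-1) 2 :=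
    hbig0.mono i0 (S.k-1) (by omega) (by omega) (by omega)
  have hprev : S.cext c (S.k-1) 2 = S.aext (S.k-1) 2 := by
    have h := crow_a (j:=2) (i := S.k-1) hS hc (by omega) (by omega) (by omega) (by omega)
    norm_num at h
    exact h
  have hple := aprev_le hS
  omega

lemma no_dup (hS : S.Std) (hc : S.CondC c) {t : ℤ} (ht1 : 1 ≤ t) (ht2 : t ≤ 2*S.T)
    {u v : ℤ} (hu : S.k+1 ≤ u) (huv : u < v) (hv : v ≤ S.k+S.n) :
    ¬ (S.cext c u (2*S.jpos t-2) = S.cext c v (2*S.jpos t-2) ∧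
       S.cext c u (2*S.jpos t-1) = S.cext c v (2*S.jpos t-1)) := by
  rintro ⟨e1, e2⟩
  have hg := hS.hg
  have hk1 := hS.hk1
  have hkk := S.k_eq
  have hj2 := jpos_ge_two hS ht1 ht2
  have hjg := jpos_le_g hS ht1 ht2
  have hbig := bigII hS hc ht1 ht2
  obtain ⟨istar, hi1, hi2, haeq, hsa, hsb, hpair, hcnt⟩ := hbig.exists_istar
  have hf1 := pair_force (fun i => S.cext c i (2*S.jpos t-2)) (fun i => S.cext c i (2*S.jpos t-1)) hpair u v
    (rfl : S.cext c u (2*S.jpos t-2) = S.cext c u (2*S.jpos t-2))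
    (rfl : S.cext c u (2*S.jpos t-1) = S.cext c u (2*S.jpos t-1))
    e1.symm e2.symm (by omega) huv hv
  obtain ⟨i0, h01, h0k, hea, heb⟩ := small_dup hS ht1 ht2
  have t1 : S.cext c i0 (2*S.jpos t-2) = S.aext i0 (2*S.jpos t-2) :=
    crow_a hS hc (by omega) (by omega) (by omega) hjg
  have t2 : S.cext c (i0+1) (2*S.jpos t-2) = S.aext (i0+1) (2*S.jpos t-2) :=
    crow_a hS hc (by omega) (by omega) (by omega) hjg
  have t3 : S.cext c i0 (2*S.jpos t-1) = S.aext i0 (2*S.jpos t-1) + S.N :=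
    crow_b hS hc (by omega) (by omega) (by omega) hjg
  have t4 : S.cext c (i0+1) (2*S.jpos t-1) = S.aext (i0+1) (2*S.jpos t-1) + S.N :=
    crow_b hS hc (by omega) (by omega) (by omega) hjg
  have hf2 := pair_force (fun i => S.cext c i (2*S.jpos t-2)) (fun i => S.cext c i (2*S.jpos t-1)) hpair i0 (i0+1)
    (rfl : S.cext c i0 (2*S.jpos t-2) = S.cext c i0 (2*S.jpos t-2))
    (rfl : S.cext c i0 (2*S.jpos t-1) = S.cext c i0 (2*S.jpos t-1))
    (by show S.cext c (i0+1) (2*S.jpos t-2) = S.cext c i0 (2*S.jpos t-2); rw [t1, t2]; exact hea.symm)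
    (by show S.cext c (i0+1) (2*S.jpos t-1) = S.cext c i0 (2*S.jpos t-1); rw [t3, t4, heb])
    h01 (by omega) (by omega)
  have hm1 : S.cext c i0 (2*S.jpos t-2) ≤ S.cext c (S.k-1) (2*S.jpos t-2) :=
    hbig.mono i0 (S.k-1) (by omega) (by omega) (by omega)
  have hm2 : S.cext c (S.k+1) (2*S.jpos t-2) ≤ S.cext c u (2*S.jpos t-2) :=
    hbig.mono (S.k+1) u (by omega) (by omega) (by omega)
  have hm3 : S.cext c (S.k-1) (2*S.jpos t-2) ≤ S.cext c S.k (2*S.jpos t-2) :=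
    hbig.mono (S.k-1) S.k (by omega) (by omega) (by omega)
  have hm4 : S.cext c S.k (2*S.jpos t-2) ≤ S.cext c (S.k+1) (2*S.jpos t-2) :=
    hbig.mono S.k (S.k+1) (by omega) (by omega) (by omega)
  have hstrict : S.cext c (S.k-1) (2*S.jpos t-2) < S.cext c (S.k+1) (2*S.jpos t-2) := by
    by_contra hcon
    push_neg at hcon
    have v1 : S.cext c (S.k-1) (2*S.jpos t-2) = S.cext c (S.k-1) (2*S.jpos t-2) := rfl
    have v2 : S.cext c S.k (2*S.jpos t-2) = S.cext c (S.k-1) (2*S.jpos t-2) := by omega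
    have v3 : S.cext c (S.k+1) (2*S.jpos t-2) = S.cext c (S.k-1) (2*S.jpos t-2) := by omega
    have h3 := multCount_ge_three (K := S.k+S.n)
      (a := fun i => S.cext c i (2*S.jpos t-2)) (x := S.cext c (S.k-1) (2*S.jpos t-2))
      (i1 := S.k-1) (i2 := S.k) (i3 := S.k+1)
      (by omega) (by omega) (by omega) (by omega) v1 v2 v3
    have h4 := hbig.a_mult (S.cext c (S.k-1) (2*S.jpos t-2))
    omega
  have := hf1.1
  have := hf2.1
  omega

end StdData

lemma sigma_pattern {S : StdData} (Ca Cb : ℤ → ℤ)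
    (hk : 1 ≤ S.k) (hn : 1 ≤ S.n)
    (hanti : ∀ i i', 1 ≤ i → i ≤ i' → i' ≤ S.k+S.n → Cb i' ≤ Cb i)
    (nodup : ∀ u v, S.k+1 ≤ u → u < v → v ≤ S.k+S.n →
      ¬(Ca u = Ca v ∧ Cb u = Cb v))
    (sh F : ℤ → ℤ)
    (hshape : ∀ r, 1 ≤ r → r ≤ S.n → Ca (S.k+r) = Ca (S.k+1) + sh r)
    (hstep : ∀ r, 1 ≤ r → r ≤ S.n-1 →
      (sh (r+1) = sh r ∧ F (r+1) = F r - 1) ∨ (sh (r+1) = sh r + 1 ∧ F (r+1) = F r + 1))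
    (hF1 : Ca (S.k+1) + Cb (S.k+1) = F 1)
    (hFn : Ca (S.k+S.n) + Cb (S.k+S.n) = F S.n) :
    ∀ r, 1 ≤ r → r ≤ S.n → Ca (S.k+r) + Cb (S.k+r) = F r := by
  have upper : ∀ r, 1 ≤ r → (r ≤ S.n → Ca (S.k+r) + Cb (S.k+r) ≤ F r) := by
    refine Int.le_induction ?_ ?_
    · intro _; omega
    · intro r hr ih hrn
      have ihh := ih (by omega)
      have hst := hstep r hr (by omega)
      have hb : Cb (S.k+(r+1)) ≤ Cb (S.k+r) := hanti _ _ (by omega) (by omega) (by omega)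
      have hsh1 := hshape r hr (by omega)
      have hsh2 := hshape (r+1) (by omega) (by omega)
      rcases hst with ⟨f1, f2⟩ | ⟨f1, f2⟩
      · have hne := nodup (S.k+r) (S.k+(r+1)) (by omega) (by omega) (by omega)
        have hlt : Cb (S.k+(r+1)) < Cb (S.k+r) := by
          rcases lt_or_eq_of_le hb with h | h
          · exact h
          · exact absurd ⟨by omega, h.symm⟩ hne
        omega
      · omega
  have lower : ∀ r, r ≤ S.n → (1 ≤ r → F r ≤ Ca (S.k+r) + Cb (S.k+r)) := by
    refine Int.le_induction_down ?_ ?_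
    · intro _; omega
    · intro r hr ih hr1
      have ihh := ih (by omega)
      have hst := hstep (r-1) (by omega) (by omega)
      have hb : Cb (S.k+r) ≤ Cb (S.k+(r-1)) := hanti _ _ (by omega) (by omega) (by omega)
      have hsh1 := hshape (r-1) (by omega) (by omega)
      have hsh2 := hshape r (by omega) (by omega)
      rw [(by ring : r - 1 + 1 = r)] at hst
      rcases hst with ⟨f1, f2⟩ | ⟨f1, f2⟩
      · have hne := nodup (S.k+(r-1)) (S.k+r) (by omega) (by omega) (by omega)
        have hlt : Cb (S.k+r) < Cb (S.k+(r-1)) := by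
          rcases lt_or_eq_of_le hb with h | h
          · exact h
          · exact absurd ⟨by omega, h.symm⟩ hne
        omega
      · omega
  intro r h1 h2
  have hu := upper r h1 h2
  have hl := lower r h2 h1
  omega


namespace StdData

variable {S : StdData} {c : ℤ → ℤ → ℤ}

lemma shape_transfer (hS : S.Std) (hc : S.CondC c) {t : ℤ} (ht1 : 1 ≤ t) (htt : t+1 ≤ 2*S.T)
    (sh2 : ℤ → ℤ)
    (hbase : ∀ r, 1 ≤ r → r ≤ S.n →
      S.cext c (S.k+r) (2*S.jpos t) = S.cext c (S.k+1) (2*S.jpos t) + sh2 r) :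
    ∀ r, 1 ≤ r → r ≤ S.n →
      S.cext c (S.k+r) (2*S.jpos (t+1)-2) = S.cext c (S.k+1) (2*S.jpos (t+1)-2) + sh2 r := by
  have hg := hS.hg
  have hk1 := hS.hk1
  have hm := hS.hm
  have hkk := S.k_eq
  have hnn := S.n_eq
  have hjt2 := jpos_ge_two hS ht1 (by omega)
  have hjtg := jpos_le_g hS ht1 (by omega)
  have hjn2 := jpos_ge_two hS (by omega : (1:ℤ) ≤ t+1) htt
  have hjng := jpos_le_g hS (by omega : (1:ℤ) ≤ t+1) htt
  have hmono := hS.hj_mono t (t+1) ht1 (by omega) htt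
  have key : ∀ jj, S.jpos t + 1 ≤ jj → (jj ≤ S.jpos (t+1) → ∀ r, 1 ≤ r → r ≤ S.n →
      S.cext c (S.k+r) (2*jj-2) = S.cext c (S.k+1) (2*jj-2) + sh2 r) := by
    refine Int.le_induction ?_ ?_
    · intro _ r h1 h2
      have e : 2*(S.jpos t + 1)-2 = 2*S.jpos t := by ring
      rw [e]
      exact hbase r h1 h2
    · intro jj hjj ih hle r h1 h2
      have hdjj : S.d jj = 2*S.g-2 :=
        d_even_col hS (by omega) (by omega)
          (no_jpos_between hS ht1 htt (by omega) (by omega))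
      have e1 := newrow_even_sum hS hc (j := jj) (by omega) (by omega) hdjj
        (i := S.k+r) (by omega) (by omega)
      have e2 := newrow_even_sum hS hc (j := jj) (by omega) (by omega) hdjj
        (i := S.k+1) (by omega) (by omega)
      have f1 := c2' hS hc (i := S.k+r) (j := jj) (by omega) (by omega) (by omega) (by omega)
      have f2 := c2' hS hc (i := S.k+1) (j := jj) (by omega) (by omega) (by omega) (by omega)
      have ihr := ih (by omega) r h1 h2
      have ee : 2*(jj+1)-2 = 2*jj := by ring
      rw [ee]
      omega
  exact key (S.jpos (t+1)) (by omega) le_rfl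

lemma master (hS : S.Std) (hc : S.CondC c) :
    ∀ t, 1 ≤ t → (t ≤ 2*S.T → ∀ r, 1 ≤ r → r ≤ S.n →
      (Odd t → S.cext c (S.k+r) (2*S.jpos t-2) = S.cext c (S.k+1) (2*S.jpos t-2) + r/2 ∧
        S.cext c (S.k+r) (2*S.jpos t-2) + S.cext c (S.k+r) (2*S.jpos t-1)
          = S.g+S.N-2 + (r/2 - (r-1)/2)) ∧
      (Even t → S.cext c (S.k+r) (2*S.jpos t-2) = S.cext c (S.k+1) (2*S.jpos t-2) + (r-1)/2 ∧
        S.cext c (S.k+r) (2*S.jpos t-2) + S.cext c (S.k+r) (2*S.jpos t-1)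
          = S.g+S.N-2 - (r/2 - (r-1)/2))) := by
  have hg := hS.hg
  have hk1 := hS.hk1
  have hm := hS.hm
  have hT := hS.hT
  have hkk := S.k_eq
  have hnn := S.n_eq
  refine Int.le_induction ?_ ?_
  · -- base case t = 1
    intro h2T r hr1 hr2
    have hsh : ∀ r', 1 ≤ r' → r' ≤ S.n →
        S.cext c (S.k+r') 2 = S.cext c (S.k+1) 2 + r'/2 := by
      intro r' h1 h2
      have v1 := newrow_col2 (i := S.k+r') hS hc (by omega) (by omega)
      have v2 := newrow_col2 (i := S.k+1) hS hc (by omega) (by omega)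
      have s1 : seqA (S.k+r') = S.k1 + r'/2 := by unfold seqA; omega
      have s2 : seqA (S.k+1) = S.k1 := by unfold seqA; omega
      omega
    have hbig0 := bigII hS hc (t:=1) le_rfl (by omega)
    rw [Dval_odd hS le_rfl (by omega) ⟨0, by ring⟩, hS.hj_one] at hbig0
    norm_num at hbig0
    have hσ := sigma_pattern (fun i => S.cext c i 2) (fun i => S.cext c i 3)
      (by omega) (by omega) hbig0.anti
      (fun u v hu huv hv => by
        have h := no_dup hS hc (t := 1) le_rfl (by omega) hu huv hv
        rw [hS.hj_one] at h
        norm_num at h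
        exact fun hx => h hx.1 hx.2)
      (fun r' => r'/2) (fun r' => S.g+S.N-2 + (r'/2 - (r'-1)/2))
      hsh
      (by intro r' h1 h2
          rcases Int.even_or_odd r' with ⟨s, hs⟩ | ⟨s, hs⟩
          · left; constructor <;> omega
          · right; constructor <;> omega)
      (by have h := sigma_first hS hc; omega)
      (by have h6 := hc.2.2.2.2.2
          have hD : (S.dhat 2 - 1)/2 = S.g+S.N-1 := by
            have h := Dval_odd hS (t:=1) le_rfl (by omega) ⟨0, by ring⟩
            rwa [hS.hj_one] at h
          have e2 : S.cext c (S.k+S.n) 2 = c (S.k+S.n) 2 := cext_int S c hg (by omega) (by omega)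
          have e3 : S.cext c (S.k+S.n) 3 = c (S.k+S.n) 3 := cext_int S c hg (by omega) (by omega)
          omega)
    constructor
    · intro _
      constructor
      · rw [hS.hj_one]; norm_num
        exact hsh r hr1 hr2
      · rw [hS.hj_one]; norm_num
        exact hσ r hr1 hr2
    · rintro ⟨s, hs⟩; omega
  · -- step case
    intro t ht1 ih h2T r hr1 hr2
    have iht := ih (by omega)
    have hjt2 := jpos_ge_two hS ht1 (by omega)
    have hjtg := jpos_le_g hS ht1 (by omega)
    have hjn2 := jpos_ge_two hS (by omega : (1:ℤ) ≤ t+1) h2T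
    have hjng := jpos_le_g hS (by omega : (1:ℤ) ≤ t+1) h2T
    have hbign := bigII hS hc (t := t+1) (by omega) h2T
    have hC5 := hc.2.2.2.2.1
    rcases Int.even_or_odd t with hev | hod
    · -- t even, t+1 odd
      have hod1 : Odd (t+1) := by obtain ⟨s, hs⟩ := hev; exact ⟨s, by omega⟩
      have hDt := Dval_even hS ht1 (by omega) hev
      have hDn := Dval_odd hS (by omega) h2T hod1
      have hshp : ∀ r', 1 ≤ r' → r' ≤ S.n →
          S.cext c (S.k+r') (2*S.jpos t-2) = S.cext c (S.k+1) (2*S.jpos t-2) + (r'-1)/2 :=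
        fun r' h1 h2 => ((iht r' h1 h2).2 hev).1
      have hσt : ∀ r', 1 ≤ r' → r' ≤ S.n →
          S.cext c (S.k+r') (2*S.jpos t-2) + S.cext c (S.k+r') (2*S.jpos t-1)
            = S.g+S.N-2 - (r'/2 - (r'-1)/2) :=
        fun r' h1 h2 => ((iht r' h1 h2).2 hev).2
      have hbase : ∀ r', 1 ≤ r' → r' ≤ S.n →
          S.cext c (S.k+r') (2*S.jpos t) = S.cext c (S.k+1) (2*S.jpos t) + r'/2 := by
        intro r' h1 h2
        have f1 := c2' hS hc (i := S.k+r') (j := S.jpos t) (by omega) (by omega) (by omega) (by omega)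
        have f2 := c2' hS hc (i := S.k+1) (j := S.jpos t) (by omega) (by omega) (by omega) (by omega)
        have g1 := hσt r' h1 h2
        have g2 := hσt 1 (by omega) (by omega)
        have s1 := hshp r' h1 h2
        omega
      have hshn := shape_transfer hS hc ht1 h2T (fun r' => r'/2) hbase
      have hE1 : S.cext c (S.k+1) (2*S.jpos (t+1)-2) + S.cext c (S.k+1) (2*S.jpos (t+1)-1)
          = S.g+S.N-2 := by
        have h := (hC5 (S.k+1) t (by omega) (by omega) ht1 (by omega)).1
        have hip : S.cext c (S.k+1) (2*S.jpos t-2) + S.cext c (S.k+1) (2*S.jpos t-1)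
            = (S.dhat (S.jpos t)-1)/2 := by
          have h2 := hσt 1 (by omega) (by omega); omega
        have h3 := h hip
        omega
      have hEn : S.cext c (S.k+S.n) (2*S.jpos (t+1)-2) + S.cext c (S.k+S.n) (2*S.jpos (t+1)-1)
          = S.g+S.N-1 := by
        have h := (hC5 (S.k+S.n) t (by omega) (by omega) ht1 (by omega)).2
        have hip : S.cext c (S.k+S.n) (2*S.jpos t-2) + S.cext c (S.k+S.n) (2*S.jpos t-1)
            = (S.dhat (S.jpos t)-1)/2 - 1 := by
          have h2 := hσt S.n (by omega) (by omega); omega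
        have h3 := h hip
        omega
      have hσn := sigma_pattern (fun i => S.cext c i (2*S.jpos (t+1)-2))
        (fun i => S.cext c i (2*S.jpos (t+1)-1))
        (by omega) (by omega) hbign.anti
        (fun u v hu huv hv => no_dup hS hc (by omega) h2T hu huv hv)
        (fun r' => r'/2) (fun r' => S.g+S.N-2 + (r'/2 - (r'-1)/2))
        hshn
        (by intro r' h1 h2
            rcases Int.even_or_odd r' with ⟨s, hs⟩ | ⟨s, hs⟩
            · left; constructor <;> omega
            · right; constructor <;> omega)
        (by have h := hE1; omega)
        (by have h := hEn; omega)
      constructor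
      · intro _
        exact ⟨hshn r hr1 hr2, hσn r hr1 hr2⟩
      · rintro ⟨s, hs⟩; obtain ⟨s2, hs2⟩ := hev; omega
    · -- t odd, t+1 even
      have hev1 : Even (t+1) := by obtain ⟨s, hs⟩ := hod; exact ⟨s+1, by omega⟩
      have hDt := Dval_odd hS ht1 (by omega) hod
      have hDn := Dval_even hS (by omega) h2T hev1
      have hshp : ∀ r', 1 ≤ r' → r' ≤ S.n →
          S.cext c (S.k+r') (2*S.jpos t-2) = S.cext c (S.k+1) (2*S.jpos t-2) + r'/2 :=
        fun r' h1 h2 => ((iht r' h1 h2).1 hod).1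
      have hσt : ∀ r', 1 ≤ r' → r' ≤ S.n →
          S.cext c (S.k+r') (2*S.jpos t-2) + S.cext c (S.k+r') (2*S.jpos t-1)
            = S.g+S.N-2 + (r'/2 - (r'-1)/2) :=
        fun r' h1 h2 => ((iht r' h1 h2).1 hod).2
      have hbase : ∀ r', 1 ≤ r' → r' ≤ S.n →
          S.cext c (S.k+r') (2*S.jpos t) = S.cext c (S.k+1) (2*S.jpos t) + (r'-1)/2 := by
        intro r' h1 h2
        have f1 := c2' hS hc (i := S.k+r') (j := S.jpos t) (by omega) (by omega) (by omega) (by omega)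
        have f2 := c2' hS hc (i := S.k+1) (j := S.jpos t) (by omega) (by omega) (by omega) (by omega)
        have g1 := hσt r' h1 h2
        have g2 := hσt 1 (by omega) (by omega)
        have s1 := hshp r' h1 h2
        omega
      have hshn := shape_transfer hS hc ht1 h2T (fun r' => (r'-1)/2) hbase
      have hE1 : S.cext c (S.k+1) (2*S.jpos (t+1)-2) + S.cext c (S.k+1) (2*S.jpos (t+1)-1)
          = S.g+S.N-2 := by
        have h := (hC5 (S.k+1) t (by omega) (by omega) ht1 (by omega)).2
        have hip : S.cext c (S.k+1) (2*S.jpos t-2) + S.cext c (S.k+1) (2*S.jpos t-1)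
            = (S.dhat (S.jpos t)-1)/2 - 1 := by
          have h2 := hσt 1 (by omega) (by omega); omega
        have h3 := h hip
        omega
      have hEn : S.cext c (S.k+S.n) (2*S.jpos (t+1)-2) + S.cext c (S.k+S.n) (2*S.jpos (t+1)-1)
          = S.g+S.N-3 := by
        have h := (hC5 (S.k+S.n) t (by omega) (by omega) ht1 (by omega)).1
        have hip : S.cext c (S.k+S.n) (2*S.jpos t-2) + S.cext c (S.k+S.n) (2*S.jpos t-1)
            = (S.dhat (S.jpos t)-1)/2 := by
          have h2 := hσt S.n (by omega) (by omega); omega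
        have h3 := h hip
        omega
      have hσn := sigma_pattern (fun i => S.cext c i (2*S.jpos (t+1)-2))
        (fun i => S.cext c i (2*S.jpos (t+1)-1))
        (by omega) (by omega) hbign.anti
        (fun u v hu huv hv => no_dup hS hc (by omega) h2T hu huv hv)
        (fun r' => (r'-1)/2) (fun r' => S.g+S.N-2 - (r'/2 - (r'-1)/2))
        hshn
        (by intro r' h1 h2
            rcases Int.even_or_odd r' with ⟨s, hs⟩ | ⟨s, hs⟩
            · right; constructor <;> omega
            · left; constructor <;> omega)
        (by have h := hE1; omega)
        (by have h := hEn; omega)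
      constructor
      · rintro ⟨s, hs⟩; obtain ⟨s2, hs2⟩ := hod; omega
      · intro _
        exact ⟨hshn r hr1 hr2, hσn r hr1 hr2⟩

end StdData

open StdData in
/-- Lemma A.2 / Corollary A.3: let `c` satisfy (C1)–(C6) and let `t ∈ {1,…,2T}`.  Writing
`e = c_{k+1,2jₜ−2}` and `f = c_{k+1,2jₜ−1}`, the last `n = 2m` entries of column `2jₜ−2`
are `(e, e+1, e+1, …, e+m−1, e+m−1, e+m)` if `t` is odd and
`(e, e, e+1, e+1, …, e+m−1, e+m−1)` if `t` is even, and the last `n` entries of column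
`2jₜ−1` are `(f, f, f−1, f−1, …, f−m+1, f−m+1)` if `t` is odd and
`(f, f−1, f−1, …, f−m+1, f−m+1, f−m)` if `t` is even; the `r`-th of these entries
(`1 ≤ r ≤ n`, row `k + r`) is expressed by the closed formulas below. -/
theorem condC_oddDegree_column_pattern (S : StdData) (hS : S.Std) (c : ℤ → ℤ → ℤ)
    (hc : S.CondC c) (t : ℤ) (ht1 : 1 ≤ t) (ht2 : t ≤ 2 * S.T) :
    ∀ r, 1 ≤ r → r ≤ S.n →
      (Odd t →
        S.cext c (S.k + r) (2 * S.jpos t - 2) =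
          S.cext c (S.k + 1) (2 * S.jpos t - 2) + r / 2 ∧
        S.cext c (S.k + r) (2 * S.jpos t - 1) =
          S.cext c (S.k + 1) (2 * S.jpos t - 1) - (r - 1) / 2) ∧
      (Even t →
        S.cext c (S.k + r) (2 * S.jpos t - 2) =
          S.cext c (S.k + 1) (2 * S.jpos t - 2) + (r - 1) / 2 ∧
        S.cext c (S.k + r) (2 * S.jpos t - 1) =
          S.cext c (S.k + 1) (2 * S.jpos t - 1) - r / 2) := by
  intro r hr1 hr2
  have hg := hS.hg
  have hm := hS.hm
  have hnn := S.n_eq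
  have hM := StdData.master hS hc t ht1 ht2
  have h1 := hM r hr1 hr2
  have h0 := hM 1 (by omega) (by omega)
  constructor
  · intro ho
    obtain ⟨e1, e2⟩ := h1.1 ho
    obtain ⟨f1, f2⟩ := h0.1 ho
    exact ⟨e1, by omega⟩
  · intro he
    obtain ⟨e1, e2⟩ := h1.2 he
    obtain ⟨f1, f2⟩ := h0.2 he
    exact ⟨e1, by omega⟩

end BFM
end
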